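/- Pure ε-DP implies (α, αε²/2)-Rényi DP: if random variables X, X' satisfy P[X ∈ A] ≤ e^ε·P[X' ∈ A] and P[X' ∈ A] ≤ e^ε·P[X ∈ A] for all measurable A (with both absolutely continuous w.r.t. each other), then for every α > 1, the Rényi divergence of order α satisfies D_α(X ‖ X') ≤ αε²/2, provided discrete distributions are considered. -/

import Mathlib

open Real

/-- If `f 0 = 0` and `f` has nonneg derivative on `(0,∞)`, then `f x ≥ 0` for `x ≥ 0`. -/
lemma nonneg_of_deriv {f f' : ℝ → ℝ} (hd : ∀ x, HasDerivAt f (f' x) x) (h0 : f 0 = 0)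
    (hge : ∀ x, 0 < x → 0 ≤ f' x) {x : ℝ} (hx : 0 ≤ x) : 0 ≤ f x := by
  have hmono : MonotoneOn f (Set.Ici 0) := by
    apply monotoneOn_of_deriv_nonneg (convex_Ici 0)
    · exact fun y _ => (hd y).continuousAt.continuousWithinAt
    · exact fun y _ => (hd y).differentiableAt.differentiableWithinAt
    · intro y hy
      rw [(hd y).deriv]
      exact hge y (by simpa using hy)
  calc (0:ℝ) = f 0 := h0.symm
    _ ≤ f x := hmono (by simp) (by simpa using hx) hx

lemma lemA {x : ℝ} (hx : 0 ≤ x) : Real.sinh x ≤ x * Real.cosh x := by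
  have h := nonneg_of_deriv (f := fun t => t * Real.cosh t - Real.sinh t)
      (f' := fun t => t * Real.sinh t)
      (fun y => by
        have h1 : HasDerivAt (fun t => t * Real.cosh t) (1 * Real.cosh y + y * Real.sinh y) y :=
          (hasDerivAt_id y).mul (Real.hasDerivAt_cosh y)
        have h2 := h1.sub (Real.hasDerivAt_sinh y)
        exact h2.congr_deriv (by ring))
      (by simp)
      (fun y hy => mul_nonneg hy.le (Real.sinh_nonneg_iff.2 hy.le)) hx
  linarith

lemma lemB {a b : ℝ} (ha : 0 ≤ a) (hab : a ≤ b) : b * Real.sinh a ≤ a * Real.sinh b := by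
  rcases eq_or_lt_of_le ha with rfl | ha'
  · simp
  · have hmono : MonotoneOn (fun t => Real.sinh t / t) (Set.Ioi 0) := by
      apply monotoneOn_of_deriv_nonneg (convex_Ioi 0)
      · exact ContinuousOn.div Real.continuous_sinh.continuousOn continuousOn_id
          (fun y hy => ne_of_gt hy)
      · intro y hy
        rw [interior_Ioi] at hy
        exact (((Real.hasDerivAt_sinh y).div (hasDerivAt_id y)
          (ne_of_gt hy)).differentiableAt).differentiableWithinAt
      · intro y hy
        rw [interior_Ioi] at hy
        have hd := (Real.hasDerivAt_sinh y).div (hasDerivAt_id y) (ne_of_gt (α := ℝ) hy)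
        have hd' : HasDerivAt (fun t => Real.sinh t / t)
            ((Real.cosh y * y - Real.sinh y * 1) / y ^ 2) y := hd
        rw [hd'.deriv]
        have h1 : Real.sinh y ≤ y * Real.cosh y := lemA hy.le
        have hy0 : (0:ℝ) < y := hy
        have h2 : (0:ℝ) < y ^ 2 := by positivity
        apply div_nonneg _ h2.le
        nlinarith
    have hb : (0:ℝ) < b := lt_of_lt_of_le ha' hab
    have := hmono (Set.mem_Ioi.2 ha') (Set.mem_Ioi.2 hb) hab
    rw [div_le_div_iff₀ ha' hb] at this
    linarith

lemma lemC {k u : ℝ} (hk : 1 ≤ k) (hu : 0 ≤ u) :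
    Real.sinh (k * u) * Real.cosh u ≤ k * (Real.sinh u * Real.cosh (k * u)) := by
  have hB := lemB (a := (k - 1) * u) (b := (k + 1) * u)
    (by nlinarith) (by nlinarith)
  have e1 : (k - 1) * u = k * u - u := by ring
  have e2 : (k + 1) * u = k * u + u := by ring
  rw [e1, e2, Real.sinh_sub, Real.sinh_add] at hB
  rcases eq_or_lt_of_le hu with rfl | hu'
  · simp
  · nlinarith [hB, hu']

lemma lemD {k u : ℝ} (hk : 1 ≤ k) (hu : 0 ≤ u) :
    Real.log (Real.cosh (k * u)) ≤ k ^ 2 * Real.log (Real.cosh u) := by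
  have hd : ∀ y : ℝ, HasDerivAt
      (fun t => k ^ 2 * Real.log (Real.cosh t) - Real.log (Real.cosh (k * t)))
      (k ^ 2 * (Real.sinh y / Real.cosh y) - Real.sinh (k * y) * k / Real.cosh (k * y)) y := by
    intro y
    have h1 : HasDerivAt (fun t : ℝ => Real.log (Real.cosh t)) (Real.sinh y / Real.cosh y) y :=
      (Real.hasDerivAt_cosh y).log (Real.cosh_pos y).ne'
    have h2 : HasDerivAt (fun t : ℝ => Real.cosh (k * t)) (Real.sinh (k * y) * k) y := by
      have := (Real.hasDerivAt_cosh (k * y)).comp y ((hasDerivAt_id y).const_mul k)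
      exact this.congr_deriv (by ring)
    have h3 : HasDerivAt (fun t : ℝ => Real.log (Real.cosh (k * t)))
        (Real.sinh (k * y) * k / Real.cosh (k * y)) y := h2.log (Real.cosh_pos _).ne'
    exact (h1.const_mul (k ^ 2)).sub h3
  have key := nonneg_of_deriv hd (by simp) (fun y hy => by
    have hC := lemC hk hy.le
    have hc1 : (0:ℝ) < Real.cosh y := Real.cosh_pos y
    have hc2 : (0:ℝ) < Real.cosh (k * y) := Real.cosh_pos _
    have hrw : k ^ 2 * (Real.sinh y / Real.cosh y) = k ^ 2 * Real.sinh y / Real.cosh y :=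
      (mul_div_assoc _ _ _).symm
    rw [sub_nonneg, hrw, div_le_div_iff₀ hc2 hc1]
    nlinarith) hu
  linarith [key]

lemma lemF {k u : ℝ} (hk : 1 ≤ k) (hu : 0 ≤ u) :
    Real.cosh (k * u) ≤ Real.cosh u * Real.exp ((k ^ 2 - 1) * u ^ 2 / 2) := by
  have h1 : Real.log (Real.cosh (k * u)) ≤ k ^ 2 * Real.log (Real.cosh u) := lemD hk hu
  have h2 : Real.log (Real.cosh u) ≤ u ^ 2 / 2 := by
    have := Real.cosh_le_exp_half_sq u
    calc Real.log (Real.cosh u) ≤ Real.log (Real.exp (u ^ 2 / 2)) :=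
          Real.log_le_log (Real.cosh_pos u) this
      _ = u ^ 2 / 2 := Real.log_exp _
  have h3 : Real.log (Real.cosh (k * u)) ≤ Real.log (Real.cosh u) + (k ^ 2 - 1) * u ^ 2 / 2 := by
    have hk2 : (0:ℝ) ≤ k ^ 2 - 1 := by nlinarith
    nlinarith [Real.log_nonneg (Real.one_le_cosh u)]
  calc Real.cosh (k * u) = Real.exp (Real.log (Real.cosh (k * u))) :=
        (Real.exp_log (Real.cosh_pos _)).symm
    _ ≤ Real.exp (Real.log (Real.cosh u) + (k ^ 2 - 1) * u ^ 2 / 2) := Real.exp_le_exp.2 h3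
    _ = Real.cosh u * Real.exp ((k ^ 2 - 1) * u ^ 2 / 2) := by
        rw [Real.exp_add, Real.exp_log (Real.cosh_pos u)]

lemma expand_sc (s t : ℝ) : Real.sinh s * Real.cosh t =
    (Real.exp (s + t) + Real.exp (s - t) - Real.exp (t - s) - Real.exp (-(s + t))) / 4 := by
  rw [Real.sinh_eq, Real.cosh_eq, Real.exp_add, Real.exp_sub, Real.exp_sub,
    Real.exp_neg s, Real.exp_neg t, Real.exp_neg (s + t), Real.exp_add]
  have h1 := Real.exp_ne_zero s
  have h2 := Real.exp_ne_zero t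
  field_simp
  ring

lemma lemG {ε a : ℝ} (hε : 0 < ε) (ha : 1 < a) :
    Real.exp ((1 - a) * ε) - Real.exp (-(a * ε)) + Real.exp (a * ε) - Real.exp ((a - 1) * ε)
      ≤ (Real.exp ε - Real.exp (-ε)) * Real.exp (a * (a - 1) * ε ^ 2 / 2) := by
  have hk : (1:ℝ) ≤ 2 * a - 1 := by linarith
  have hu : (0:ℝ) ≤ ε / 2 := by linarith
  have hF := lemF hk hu
  have hexp : ((2 * a - 1) ^ 2 - 1) * (ε / 2) ^ 2 / 2 = a * (a - 1) * ε ^ 2 / 2 := by ring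
  rw [hexp] at hF
  have hs : 0 ≤ Real.sinh (ε / 2) := Real.sinh_nonneg_iff.2 hu
  have key := mul_le_mul_of_nonneg_left hF hs
  -- key : sinh(ε/2) * cosh((2a-1)*(ε/2)) ≤ sinh(ε/2) * (cosh(ε/2) * exp E)
  have e1 : Real.sinh (ε / 2) * Real.cosh ((2 * a - 1) * (ε / 2)) =
      (Real.exp (a * ε) + Real.exp ((1 - a) * ε) - Real.exp ((a - 1) * ε)
        - Real.exp (-(a * ε))) / 4 := by
    rw [expand_sc]
    have q1 : ε / 2 + (2 * a - 1) * (ε / 2) = a * ε := by ring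
    have q2 : ε / 2 - (2 * a - 1) * (ε / 2) = (1 - a) * ε := by ring
    have q3 : (2 * a - 1) * (ε / 2) - ε / 2 = (a - 1) * ε := by ring
    rw [q1, q2, q3]
  have e2 : Real.sinh (ε / 2) * Real.cosh (ε / 2) = (Real.exp ε - Real.exp (-ε)) / 4 := by
    rw [expand_sc]
    have q1 : ε / 2 + ε / 2 = ε := by ring
    have q2 : ε / 2 - ε / 2 = (0:ℝ) := by ring
    rw [q1, q2]
    simp
  rw [e1, ← mul_assoc, e2] at key
  have h4 : (0:ℝ) < 4 := by norm_num
  rw [div_le_iff₀ h4] at key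
  nlinarith [key]

/-- Pure `ε`-DP implies `(α, αε²/2)`-Rényi DP for discrete distributions with the
same (full) support: if `P(A) ≤ e^ε·Q(A)` and `Q(A) ≤ e^ε·P(A)` for all sets `A`,
then for every `α > 1`, `D_α(P ‖ Q) = (1/(α−1))·log Σ_x P(x)^α·Q(x)^{1−α} ≤ αε²/2`. -/
theorem pure_dp_implies_renyi {α : Type*} [Fintype α]
    (P Q : α → ℝ) (hP : ∀ x, 0 < P x) (hQ : ∀ x, 0 < Q x)
    (hPsum : ∑ x, P x = 1) (hQsum : ∑ x, Q x = 1)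
    (ε : ℝ) (hε : 0 ≤ ε)
    (hPQ : ∀ A : Finset α, ∑ x ∈ A, P x ≤ Real.exp ε * ∑ x ∈ A, Q x)
    (hQP : ∀ A : Finset α, ∑ x ∈ A, Q x ≤ Real.exp ε * ∑ x ∈ A, P x) :
    ∀ a : ℝ, 1 < a →
      (1 / (a - 1)) * Real.log (∑ x, P x ^ a * Q x ^ (1 - a)) ≤ a * ε ^ 2 / 2 := by
  intro a ha
  have ha1 : (0:ℝ) < a - 1 := by linarith
  -- singleton bounds
  have hub : ∀ x, P x ≤ Real.exp ε * Q x := by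
    intro x; have := hPQ {x}; simpa using this
  have hlb : ∀ x, Q x ≤ Real.exp ε * P x := by
    intro x; have := hQP {x}; simpa using this
  -- the key sum bound
  have main : ∑ x, P x ^ a * Q x ^ (1 - a) ≤ Real.exp ((a - 1) * (a * ε ^ 2 / 2)) := by
    rcases eq_or_lt_of_le hε with hε0 | hε0
    · -- ε = 0 : P = Q
      have hPQeq : ∀ x, P x = Q x := by
        intro x
        have h1 := hub x
        have h2 := hlb x
        rw [← hε0, Real.exp_zero, one_mul] at h1 h2
        linarith
      have : ∀ x, P x ^ a * Q x ^ (1 - a) = P x := by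
        intro x
        rw [← hPQeq x, ← Real.rpow_add (hP x)]
        norm_num
      rw [Finset.sum_congr rfl (fun x _ => this x), hPsum]
      exact Real.one_le_exp (by positivity)
    · -- ε > 0
      set D : ℝ := Real.exp ε - Real.exp (-ε) with hDdef
      have hD : 0 < D := by
        have : Real.exp (-ε) < Real.exp ε := Real.exp_lt_exp.2 (by linarith)
        simp [hDdef]; linarith
      set θ : α → ℝ := fun x => (Real.exp ε - P x / Q x) / D with hθdef
      have hr_le : ∀ x, P x / Q x ≤ Real.exp ε := by
        intro x; rw [div_le_iff₀ (hQ x)]; linarith [hub x]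
      have hr_ge : ∀ x, Real.exp (-ε) ≤ P x / Q x := by
        intro x
        rw [le_div_iff₀ (hQ x)]
        have h2 := hlb x
        rw [Real.exp_neg]
        rw [← mul_le_mul_iff_of_pos_left (Real.exp_pos ε), ← mul_assoc,
          mul_inv_cancel₀ (Real.exp_ne_zero ε), one_mul]
        linarith
      have hθ0 : ∀ x, 0 ≤ θ x := fun x =>
        div_nonneg (by linarith [hr_le x]) hD.le
      have hθ1 : ∀ x, 0 ≤ 1 - θ x := by
        intro x
        have : θ x ≤ 1 := by
          rw [hθdef]
          simp only
          rw [div_le_one hD]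
          have := hr_ge x
          simp [hDdef]; linarith
        linarith
      -- pointwise convexity bound
      have hcx : ∀ x, Q x * (P x / Q x) ^ a ≤
          Q x * (θ x * Real.exp (-ε * a) + (1 - θ x) * Real.exp (ε * a)) := by
        intro x
        apply mul_le_mul_of_nonneg_left _ (hQ x).le
        have h := (convexOn_rpow (le_of_lt ha)).2
          (Set.mem_Ici.2 (Real.exp_pos (-ε)).le) (Set.mem_Ici.2 (Real.exp_pos ε).le)
          (hθ0 x) (hθ1 x) (by ring)
        simp only [smul_eq_mul] at h
        have hcombo : θ x * Real.exp (-ε) + (1 - θ x) * Real.exp ε = P x / Q x := by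
          rw [hθdef]
          simp only
          field_simp
          ring
        rw [hcombo] at h
        rw [← Real.exp_mul, ← Real.exp_mul] at h
        exact h
      -- term rewriting
      have hterm : ∀ x, P x ^ a * Q x ^ (1 - a) = Q x * (P x / Q x) ^ a := by
        intro x
        rw [Real.div_rpow (hP x).le (hQ x).le, Real.rpow_sub (hQ x), Real.rpow_one]
        have hQa : (0:ℝ) < Q x ^ a := Real.rpow_pos_of_pos (hQ x) a
        field_simp
      -- sum of Q x * θ x and Q x * (1 - θ x)
      have hQθ : ∀ x, Q x * θ x = (Real.exp ε * Q x - P x) / D := by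
        intro x
        rw [hθdef]
        simp only
        have h1 := (hQ x).ne'
        have h2 := hD.ne'
        field_simp
      have hQθ' : ∀ x, Q x * (1 - θ x) = (P x - Real.exp (-ε) * Q x) / D := by
        intro x
        rw [hθdef]
        simp only
        have h1 := (hQ x).ne'
        have h2 := hD.ne'
        field_simp
        ring
      have hsum1 : ∑ x, Q x * θ x = (Real.exp ε - 1) / D := by
        rw [Finset.sum_congr rfl (fun x _ => hQθ x), ← Finset.sum_div,
          Finset.sum_sub_distrib, ← Finset.mul_sum, hQsum, hPsum, mul_one]
      have hsum2 : ∑ x, Q x * (1 - θ x) = (1 - Real.exp (-ε)) / D := by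
        rw [Finset.sum_congr rfl (fun x _ => hQθ' x), ← Finset.sum_div,
          Finset.sum_sub_distrib, ← Finset.mul_sum, hQsum, hPsum, mul_one]
      -- combine
      have step1 : ∑ x, P x ^ a * Q x ^ (1 - a) ≤
          ((Real.exp ε - 1) / D) * Real.exp (-ε * a) +
          ((1 - Real.exp (-ε)) / D) * Real.exp (ε * a) := by
        calc ∑ x, P x ^ a * Q x ^ (1 - a) = ∑ x, Q x * (P x / Q x) ^ a :=
              Finset.sum_congr rfl (fun x _ => hterm x)
          _ ≤ ∑ x, Q x * (θ x * Real.exp (-ε * a) + (1 - θ x) * Real.exp (ε * a)) :=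
              Finset.sum_le_sum (fun x _ => hcx x)
          _ = (∑ x, Q x * θ x) * Real.exp (-ε * a) +
              (∑ x, Q x * (1 - θ x)) * Real.exp (ε * a) := by
              rw [Finset.sum_mul, Finset.sum_mul, ← Finset.sum_add_distrib]
              exact Finset.sum_congr rfl (fun x _ => by ring)
          _ = _ := by rw [hsum1, hsum2]
      -- use the analytic lemma
      have hG := lemG hε0 ha
      have merge : ∀ u v w : ℝ, u + v = w → Real.exp u * Real.exp v = Real.exp w := by
        intro u v w h; rw [← Real.exp_add, h]
      have hnum : (Real.exp ε - 1) * Real.exp (-ε * a) + (1 - Real.exp (-ε)) * Real.exp (ε * a)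
          = Real.exp ((1 - a) * ε) - Real.exp (-(a * ε)) + Real.exp (a * ε)
            - Real.exp ((a - 1) * ε) := by
        have m1 := merge ε (-ε * a) ((1 - a) * ε) (by ring)
        have m2 := merge (-ε) (ε * a) ((a - 1) * ε) (by ring)
        have m3 : Real.exp (-ε * a) = Real.exp (-(a * ε)) := by ring_nf
        have m4 : Real.exp (ε * a) = Real.exp (a * ε) := by ring_nf
        nlinarith [m1, m2, m3, m4]
      have step2 : ((Real.exp ε - 1) / D) * Real.exp (-ε * a) +
          ((1 - Real.exp (-ε)) / D) * Real.exp (ε * a) ≤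
          Real.exp ((a - 1) * (a * ε ^ 2 / 2)) := by
        rw [div_mul_eq_mul_div, div_mul_eq_mul_div, ← add_div, div_le_iff₀ hD]
        rw [hnum]
        calc Real.exp ((1 - a) * ε) - Real.exp (-(a * ε)) + Real.exp (a * ε)
              - Real.exp ((a - 1) * ε)
            ≤ D * Real.exp (a * (a - 1) * ε ^ 2 / 2) := hG
          _ = Real.exp ((a - 1) * (a * ε ^ 2 / 2)) * D := by
              rw [mul_comm]
              congr 1
              ring_nf
      linarith [step1, step2]
  -- conclude from `main`
  have hSpos : 0 < ∑ x, P x ^ a * Q x ^ (1 - a) := by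
    have hne : (Finset.univ : Finset α).Nonempty := by
      by_contra h
      rw [Finset.not_nonempty_iff_eq_empty] at h
      rw [show (∑ x, P x) = ∑ x ∈ (Finset.univ : Finset α), P x from rfl, h] at hPsum
      simp at hPsum
    exact Finset.sum_pos (fun x _ => mul_pos (Real.rpow_pos_of_pos (hP x) a)
      (Real.rpow_pos_of_pos (hQ x) _)) hne
  have hlog : Real.log (∑ x, P x ^ a * Q x ^ (1 - a)) ≤ (a - 1) * (a * ε ^ 2 / 2) := by
    calc Real.log (∑ x, P x ^ a * Q x ^ (1 - a))
        ≤ Real.log (Real.exp ((a - 1) * (a * ε ^ 2 / 2))) := Real.log_le_log hSpos main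
      _ = (a - 1) * (a * ε ^ 2 / 2) := Real.log_exp _
  calc (1 / (a - 1)) * Real.log (∑ x, P x ^ a * Q x ^ (1 - a))
      ≤ (1 / (a - 1)) * ((a - 1) * (a * ε ^ 2 / 2)) := by
        apply mul_le_mul_of_nonneg_left hlog (by positivity)
    _ = a * ε ^ 2 / 2 := by field_simp
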